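/- Fix ξ ∈ ℂⁿ and f = (f₁,…,f_N) ∈ ℂ[x]^N. Let D ⊆ ℂ[d_ξ] be a finite-dimensional subspace such that: D is stable under each derivation ∂_{d_k}; every element of D, as a functional, vanishes on f₁,…,f_N; the constant 1 belongs to D; and D is complete for f at ξ, i.e., every Δ ∈ ℂ[d_ξ] with ∂_{d_k}(Δ) ∈ D for all k = 1,…,n and Δ(f_i) = 0 for all i = 1,…,N belongs to D. Then D = (f)^⊥ ∩ ℂ[d_ξ], i.e., D equals the space of all polynomial functionals vanishing on the ideal (f₁,…,f_N); equivalently, D = Q^⊥ where Q is the m_ξ-primary component of (f₁,…,f_N) at ξ. -/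

import Mathlib

open MvPolynomial

/-- Total degree `|β|` of an exponent vector `β ∈ ℕⁿ`. -/
def mdeg {n : ℕ} (a : Fin n →₀ ℕ) : ℕ := ∑ i, a i

/-- Iterated partial derivative `∂^β p`. -/
noncomputable def pdiff {n : ℕ} (β : Fin n →₀ ℕ) (p : MvPolynomial (Fin n) ℂ) :
    MvPolynomial (Fin n) ℂ :=
  (List.finRange n).foldr (fun i q => (fun r => pderiv i r)^[β i] q) p

/-- The linear functional on `ℂ[x]` attached to the dual polynomial `Λ ∈ ℂ[d_ξ]`:
`Λ(p) = Σ_β coeff_β(Λ) • (∂^β p)(ξ)`. -/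
noncomputable def dapply {n : ℕ} (ξ : Fin n → ℂ) (Λ p : MvPolynomial (Fin n) ℂ) : ℂ :=
  ∑ β ∈ Λ.support, coeff β Λ * eval ξ (pdiff β p)

/-- The shifted monomial `(x-ξ)^β`. -/
noncomputable def xpow {n : ℕ} (ξ : Fin n → ℂ) (β : Fin n →₀ ℕ) : MvPolynomial (Fin n) ℂ :=
  ∏ i, (X i - C (ξ i)) ^ β i

/-- `∫ᵏΛ`: substitute `0` for `d_{k+1},…,d_n` in `Λ` and take the antiderivative with
respect to `d_k` having no constant term. -/
noncomputable def integ {n : ℕ} (k : Fin n) (Λ : MvPolynomial (Fin n) ℂ) :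
    MvPolynomial (Fin n) ℂ :=
  let Λ' := aeval (fun i => if i ≤ k then X i else 0) Λ
  ∑ β ∈ Λ'.support, monomial (β + Finsupp.single k 1) (coeff β Λ' / ((β k : ℂ) + 1))

/-- The maximal ideal `m_ξ` of polynomials vanishing at `ξ`. -/
noncomputable def mIdeal {n : ℕ} (ξ : Fin n → ℂ) : Ideal (MvPolynomial (Fin n) ℂ) :=
  RingHom.ker (eval ξ)

/-- `β! = β₁!⋯βₙ!`. -/
def ffact {n : ℕ} (a : Fin n →₀ ℕ) : ℕ := ∏ i, (a i).factorial

noncomputable def pdiffL {n : ℕ} (l : List (Fin n)) (β : Fin n →₀ ℕ)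
    (p : MvPolynomial (Fin n) ℂ) : MvPolynomial (Fin n) ℂ :=
  l.foldr (fun i q => (fun r => pderiv i r)^[β i] q) p

lemma pdiff_eq {n : ℕ} (β : Fin n →₀ ℕ) (p : MvPolynomial (Fin n) ℂ) :
    pdiff β p = pdiffL (List.finRange n) β p := rfl

lemma iter_add {n : ℕ} (i : Fin n) (m : ℕ) (p q : MvPolynomial (Fin n) ℂ) :
    (fun r => pderiv i r)^[m] (p + q) =
      (fun r => pderiv i r)^[m] p + (fun r => pderiv i r)^[m] q := by
  induction m generalizing p q with
  | zero => rfl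
  | succ m ih => rw [Function.iterate_succ_apply, Function.iterate_succ_apply,
      Function.iterate_succ_apply, map_add, ih]

lemma iter_C_mul {n : ℕ} (i : Fin n) (m : ℕ) (c : ℂ) (p : MvPolynomial (Fin n) ℂ) :
    (fun r => pderiv i r)^[m] (C c * p) = C c * (fun r => pderiv i r)^[m] p := by
  induction m generalizing p with
  | zero => rfl
  | succ m ih => rw [Function.iterate_succ_apply, Function.iterate_succ_apply, pderiv_C_mul, ih]

lemma pdiffL_add {n : ℕ} (l : List (Fin n)) (β : Fin n →₀ ℕ) (p q : MvPolynomial (Fin n) ℂ) :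
    pdiffL l β (p + q) = pdiffL l β p + pdiffL l β q := by
  induction l with
  | nil => rfl
  | cons i t ih => simp only [pdiffL, List.foldr_cons] at *; rw [ih, iter_add]

lemma pdiffL_C_mul {n : ℕ} (l : List (Fin n)) (β : Fin n →₀ ℕ) (c : ℂ)
    (p : MvPolynomial (Fin n) ℂ) : pdiffL l β (C c * p) = C c * pdiffL l β p := by
  induction l with
  | nil => rfl
  | cons i t ih => simp only [pdiffL, List.foldr_cons] at *; rw [ih, iter_C_mul]

lemma pdiffL_congr {n : ℕ} (l : List (Fin n)) {β β' : Fin n →₀ ℕ}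
    (h : ∀ i ∈ l, β i = β' i) (p : MvPolynomial (Fin n) ℂ) :
    pdiffL l β p = pdiffL l β' p := by
  induction l with
  | nil => rfl
  | cons i t ih =>
      simp only [pdiffL, List.foldr_cons] at *
      rw [ih (fun j hj => h j (List.mem_cons_of_mem _ hj)), h i (List.mem_cons_self)]

lemma pderiv_pderiv_comm {n : ℕ} (i j : Fin n) (p : MvPolynomial (Fin n) ℂ) :
    pderiv i (pderiv j p) = pderiv j (pderiv i p) := by
  induction p using MvPolynomial.induction_on' with
  | monomial s a =>
      simp only [pderiv_monomial]
      rcases eq_or_ne i j with rfl | hij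
      · rfl
      · have h1 : ((s - Finsupp.single j 1 : Fin n →₀ ℕ)) i = s i := by
          rw [Finsupp.tsub_apply, Finsupp.single_apply, if_neg hij.symm, Nat.sub_zero]
        have h2 : ((s - Finsupp.single i 1 : Fin n →₀ ℕ)) j = s j := by
          rw [Finsupp.tsub_apply, Finsupp.single_apply, if_neg hij, Nat.sub_zero]
        rw [h1, h2]
        congr 1
        · rw [tsub_tsub, tsub_tsub, add_comm]
        · ring
  | add p q hp hq => simp only [map_add, hp, hq]

lemma pderiv_mul_X_sub_ne {n : ℕ} {i k : Fin n} (h : i ≠ k) (c : ℂ)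
    (q : MvPolynomial (Fin n) ℂ) :
    pderiv i ((X k - C c) * q) = (X k - C c) * pderiv i q := by
  rw [pderiv_mul]
  simp [pderiv_X_of_ne h.symm]

lemma iter_pderiv_mul_X_sub_ne {n : ℕ} {i k : Fin n} (h : i ≠ k) (c : ℂ) (m : ℕ)
    (q : MvPolynomial (Fin n) ℂ) :
    (fun r => pderiv i r)^[m] ((X k - C c) * q) = (X k - C c) * (fun r => pderiv i r)^[m] q := by
  induction m generalizing q with
  | zero => rfl
  | succ m ih => rw [Function.iterate_succ_apply, Function.iterate_succ_apply,
      pderiv_mul_X_sub_ne h, ih]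

lemma iter_pderiv_mul_X_sub_self {n : ℕ} (k : Fin n) (c : ℂ) (m : ℕ)
    (q : MvPolynomial (Fin n) ℂ) :
    (fun r => pderiv k r)^[m] ((X k - C c) * q) =
      (X k - C c) * (fun r => pderiv k r)^[m] q + (m : ℂ) • (fun r => pderiv k r)^[m - 1] q := by
  induction m generalizing q with
  | zero => simp
  | succ m ih =>
      rw [Function.iterate_succ_apply', ih, map_add]
      have h1 : pderiv k ((X k - C c) * (fun r => pderiv k r)^[m] q) =
          (X k - C c) * (fun r => pderiv k r)^[m+1] q + (fun r => pderiv k r)^[m] q := by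
        rw [pderiv_mul, Function.iterate_succ_apply']
        have : (pderiv k) (X k - C c) = 1 := by simp
        rw [this]
        ring
      rw [h1]
      rcases Nat.eq_zero_or_pos m with rfl | hm
      · simp
      · have h2 : (pderiv k) ((m:ℂ) • (fun r => pderiv k r)^[m - 1] q) =
            (m:ℂ) • (fun r => pderiv k r)^[m] q := by
          rw [smul_eq_C_mul, smul_eq_C_mul, pderiv_C_mul]
          congr 1
          have h3 := Function.iterate_succ_apply' (fun r => (pderiv k) r) (m-1) q
          rw [Nat.succ_eq_add_one, Nat.sub_add_cancel hm] at h3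
          exact h3.symm
        rw [h2]
        push_cast
        module

lemma pdiffL_smul {n : ℕ} (l : List (Fin n)) (β : Fin n →₀ ℕ) (c : ℂ)
    (p : MvPolynomial (Fin n) ℂ) : pdiffL l β (c • p) = c • pdiffL l β p := by
  rw [smul_eq_C_mul, smul_eq_C_mul, pdiffL_C_mul]

lemma pdiffL_mul_X_sub_notmem {n : ℕ} (k : Fin n) (c : ℂ) (l : List (Fin n)) (hk : k ∉ l)
    (β : Fin n →₀ ℕ) (q : MvPolynomial (Fin n) ℂ) :
    pdiffL l β ((X k - C c) * q) = (X k - C c) * pdiffL l β q := by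
  induction l with
  | nil => rfl
  | cons j s ih =>
      have hj : j ≠ k := fun h => hk (h ▸ List.mem_cons_self)
      show (fun r => pderiv j r)^[β j] (pdiffL s β ((X k - C c) * q)) = _
      rw [ih (fun h => hk (List.mem_cons_of_mem _ h)), iter_pderiv_mul_X_sub_ne hj]
      rfl

/-- key structural Leibniz lemma over a nodup list containing `k`. -/
lemma pdiffL_mul_X_sub {n : ℕ} (k : Fin n) (c : ℂ) (l : List (Fin n)) (hk : k ∈ l)
    (hnd : l.Nodup) (β : Fin n →₀ ℕ) (q : MvPolynomial (Fin n) ℂ) :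
    pdiffL l β ((X k - C c) * q) = (X k - C c) * pdiffL l β q +
      (β k : ℂ) • pdiffL l (β - Finsupp.single k 1) q := by
  set β' : Fin n →₀ ℕ := β - Finsupp.single k 1 with hβ'def
  have hβ'k : β' k = β k - 1 := by
    rw [hβ'def, Finsupp.tsub_apply, Finsupp.single_apply, if_pos rfl]
  have hβ'ne : ∀ j : Fin n, j ≠ k → β' j = β j := fun j hj => by
    rw [hβ'def, Finsupp.tsub_apply, Finsupp.single_apply, if_neg (fun h => hj h.symm),
      Nat.sub_zero]
  induction l generalizing q with
  | nil => cases hk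
  | cons i t ih =>
      have hnd' : t.Nodup := (List.nodup_cons.mp hnd).2
      rcases List.mem_cons.mp hk with rfl | hkt
      · have hknt : k ∉ t := (List.nodup_cons.mp hnd).1
        show (fun r => pderiv k r)^[β k] (pdiffL t β ((X k - C c) * q)) = _
        rw [pdiffL_mul_X_sub_notmem k c t hknt, iter_pderiv_mul_X_sub_self]
        congr 1
        rw [smul_eq_C_mul, smul_eq_C_mul]
        rw [show ((β k : ℂ)) = ((β k : ℂ)) from rfl]
        congr 1
        show (fun r => pderiv k r)^[β k - 1] (pdiffL t β q) =
          (fun r => pderiv k r)^[β' k] (pdiffL t β' q)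
        rw [hβ'k, pdiffL_congr t (fun j hj => (hβ'ne j (fun h => hknt (h ▸ hj))).symm)]
      · have hik : i ≠ k := fun h => (List.nodup_cons.mp hnd).1 (h ▸ hkt)
        show (fun r => pderiv i r)^[β i] (pdiffL t β ((X k - C c) * q)) = _
        rw [ih hkt hnd', iter_add, iter_pderiv_mul_X_sub_ne hik]
        have hsm : (fun r => pderiv i r)^[β i] ((β k : ℂ) • pdiffL t β' q) =
            (β k : ℂ) • (fun r => pderiv i r)^[β i] (pdiffL t β' q) := by
          rw [smul_eq_C_mul, smul_eq_C_mul, iter_C_mul]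
        rw [hsm]
        congr 2
        show _ = (fun r => pderiv i r)^[β' i] (pdiffL t β' q)
        rw [hβ'ne i hik]

lemma pdiff_mul_X_sub {n : ℕ} (k : Fin n) (c : ℂ) (β : Fin n →₀ ℕ)
    (q : MvPolynomial (Fin n) ℂ) :
    pdiff β ((X k - C c) * q) = (X k - C c) * pdiff β q +
      (β k : ℂ) • pdiff (β - Finsupp.single k 1) q := by
  rw [pdiff_eq, pdiff_eq, pdiff_eq]
  exact pdiffL_mul_X_sub k c _ (List.mem_finRange k) (List.nodup_finRange n) β q

lemma dapply_sum_subset {n : ℕ} (ξ : Fin n → ℂ) (Λ p : MvPolynomial (Fin n) ℂ)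
    {s : Finset (Fin n →₀ ℕ)} (hs : Λ.support ⊆ s) :
    dapply ξ Λ p = ∑ β ∈ s, coeff β Λ * eval ξ (pdiff β p) := by
  refine Finset.sum_subset hs (fun β _ hβ => ?_)
  rw [MvPolynomial.notMem_support_iff.mp hβ, zero_mul]

lemma dapply_add_left {n : ℕ} (ξ : Fin n → ℂ) (Λ₁ Λ₂ p : MvPolynomial (Fin n) ℂ) :
    dapply ξ (Λ₁ + Λ₂) p = dapply ξ Λ₁ p + dapply ξ Λ₂ p := by
  rw [dapply_sum_subset ξ (Λ₁ + Λ₂) p (s := Λ₁.support ∪ Λ₂.support)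
      (MvPolynomial.support_add),
    dapply_sum_subset ξ Λ₁ p (s := Λ₁.support ∪ Λ₂.support) (Finset.subset_union_left),
    dapply_sum_subset ξ Λ₂ p (s := Λ₁.support ∪ Λ₂.support) (Finset.subset_union_right),
    ← Finset.sum_add_distrib]
  exact Finset.sum_congr rfl (fun β _ => by rw [coeff_add]; ring)

lemma dapply_monomial {n : ℕ} (ξ : Fin n → ℂ) (β : Fin n →₀ ℕ) (c : ℂ)
    (p : MvPolynomial (Fin n) ℂ) :
    dapply ξ (monomial β c) p = c * eval ξ (pdiff β p) := by
  rcases eq_or_ne c 0 with rfl | hc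
  · simp [dapply, MvPolynomial.monomial_zero]
  · rw [dapply, MvPolynomial.support_monomial, if_neg hc, Finset.sum_singleton,
      MvPolynomial.coeff_monomial, if_pos rfl]

lemma dapply_add_right {n : ℕ} (ξ : Fin n → ℂ) (Λ p q : MvPolynomial (Fin n) ℂ) :
    dapply ξ Λ (p + q) = dapply ξ Λ p + dapply ξ Λ q := by
  rw [dapply, dapply, dapply, ← Finset.sum_add_distrib]
  refine Finset.sum_congr rfl (fun β _ => ?_)
  rw [pdiff_eq, pdiff_eq, pdiff_eq, pdiffL_add, map_add]
  ring

lemma dapply_C_mul_right {n : ℕ} (ξ : Fin n → ℂ) (Λ p : MvPolynomial (Fin n) ℂ) (c : ℂ) :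
    dapply ξ Λ (C c * p) = c * dapply ξ Λ p := by
  rw [dapply, dapply, Finset.mul_sum]
  refine Finset.sum_congr rfl (fun β _ => ?_)
  rw [pdiff_eq, pdiff_eq, pdiffL_C_mul, map_mul, eval_C]
  ring

lemma dapply_X_sub_mul {n : ℕ} (ξ : Fin n → ℂ) (k : Fin n) (Λ q : MvPolynomial (Fin n) ℂ) :
    dapply ξ Λ ((X k - C (ξ k)) * q) = dapply ξ (pderiv k Λ) q := by
  induction Λ using MvPolynomial.induction_on' with
  | monomial β c =>
      rw [dapply_monomial, pderiv_monomial, dapply_monomial, pdiff_mul_X_sub, map_add,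
        map_mul, map_sub, eval_X, eval_C, sub_self, zero_mul, zero_add, smul_eq_C_mul,
        map_mul, eval_C]
      ring
  | add Λ₁ Λ₂ h₁ h₂ =>
      rw [dapply_add_left, h₁, h₂, map_add, dapply_add_left]

lemma dapply_X_mul {n : ℕ} (ξ : Fin n → ℂ) (k : Fin n) (Λ q : MvPolynomial (Fin n) ℂ) :
    dapply ξ Λ (X k * q) = dapply ξ (pderiv k Λ) q + ξ k * dapply ξ Λ q := by
  have hX : (X k : MvPolynomial (Fin n) ℂ) * q = (X k - C (ξ k)) * q + C (ξ k) * q := by ring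
  rw [hX, dapply_add_right, dapply_X_sub_mul, dapply_C_mul_right]

lemma mdeg_eq_fsum {n : ℕ} (β : Fin n →₀ ℕ) : β.sum (fun _ e => e) = mdeg β := by
  rw [mdeg, Finsupp.sum_fintype]
  intro _; rfl

lemma mdeg_eq_zero_iff {n : ℕ} (β : Fin n →₀ ℕ) : mdeg β = 0 ↔ β = 0 := by
  constructor
  · intro h
    ext i
    have := Finset.sum_eq_zero_iff.mp h i (Finset.mem_univ i)
    simpa using this
  · rintro rfl; simp [mdeg]

lemma mdeg_sub_single {n : ℕ} {β : Fin n →₀ ℕ} {k : Fin n} (h : β k ≠ 0) :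
    mdeg (β - Finsupp.single k 1) + 1 = mdeg β := by
  have h1 : ∀ i ∈ Finset.univ \ {k}, ((β - Finsupp.single k 1 : Fin n →₀ ℕ)) i = β i := by
    intro i hi
    have : i ≠ k := by simpa using (Finset.mem_sdiff.mp hi).2
    rw [Finsupp.tsub_apply, Finsupp.single_apply, if_neg (fun hh => this hh.symm), Nat.sub_zero]
  have h2 : ((β - Finsupp.single k 1 : Fin n →₀ ℕ)) k = β k - 1 := by
    rw [Finsupp.tsub_apply, Finsupp.single_apply, if_pos rfl]
  have e1 : mdeg β = ∑ i ∈ Finset.univ \ {k}, β i + β k :=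
    Finset.sum_eq_sum_sdiff_singleton_add (Finset.mem_univ k) _
  have e2 : mdeg (β - Finsupp.single k 1) =
      ∑ i ∈ Finset.univ \ {k}, ((β - Finsupp.single k 1 : Fin n →₀ ℕ)) i +
        ((β - Finsupp.single k 1 : Fin n →₀ ℕ)) k :=
    Finset.sum_eq_sum_sdiff_singleton_add (Finset.mem_univ k) _
  rw [Finset.sum_congr rfl h1, h2] at e2
  rw [show ((Finset.univ \ {k}).sum ⇑β) = ∑ i ∈ Finset.univ \ {k}, β i from rfl] at e2
  omega

lemma totalDegree_pderiv_le {n : ℕ} (k : Fin n) (Λ : MvPolynomial (Fin n) ℂ) (m : ℕ)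
    (h : Λ.totalDegree ≤ m + 1) : (pderiv k Λ).totalDegree ≤ m := by
  conv_lhs => rw [Λ.as_sum]
  rw [map_sum]
  refine MvPolynomial.totalDegree_finsetSum_le (fun β hβ => ?_)
  rw [pderiv_monomial]
  rcases eq_or_ne (β k) 0 with h0 | h0
  · rw [h0]
    simp
  · refine le_trans (MvPolynomial.totalDegree_monomial_le _ _) ?_
    show ((β - Finsupp.single k 1 : Fin n →₀ ℕ)).sum (fun _ e => e) ≤ m
    rw [mdeg_eq_fsum]
    have h1 := mdeg_sub_single h0
    have h2 : mdeg β ≤ m + 1 := by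
      rw [← mdeg_eq_fsum]
      exact le_trans (MvPolynomial.le_totalDegree hβ) h
    omega

lemma pderiv_zero_of_totalDegree_zero {n : ℕ} (k : Fin n) (Λ : MvPolynomial (Fin n) ℂ)
    (h : Λ.totalDegree = 0) : pderiv k Λ = 0 := by
  conv_lhs => rw [Λ.as_sum]
  rw [map_sum]
  refine Finset.sum_eq_zero (fun β hβ => ?_)
  rw [pderiv_monomial, (MvPolynomial.totalDegree_eq_zero_iff _ Λ).mp h β hβ k, Nat.cast_zero,
    mul_zero, map_zero]

lemma iter_pderiv_comm {n : ℕ} (i k : Fin n) (m : ℕ) (q : MvPolynomial (Fin n) ℂ) :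
    (fun r => pderiv i r)^[m] (pderiv k q) = pderiv k ((fun r => pderiv i r)^[m] q) := by
  induction m generalizing q with
  | zero => rfl
  | succ m ihm =>
      rw [Function.iterate_succ_apply, Function.iterate_succ_apply]
      show (fun r => pderiv i r)^[m] (pderiv i (pderiv k q)) = _
      rw [pderiv_pderiv_comm, ihm]

lemma pdiffL_pderiv_comm {n : ℕ} (l : List (Fin n)) (β : Fin n →₀ ℕ) (k : Fin n)
    (p : MvPolynomial (Fin n) ℂ) : pdiffL l β (pderiv k p) = pderiv k (pdiffL l β p) := by
  induction l generalizing p with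
  | nil => rfl
  | cons i t ih =>
      show (fun r => pderiv i r)^[β i] (pdiffL t β (pderiv k p)) = _
      rw [ih, iter_pderiv_comm]
      rfl

lemma pdiffL_sub_single {n : ℕ} (l : List (Fin n)) (k : Fin n) (hk : k ∈ l) (hnd : l.Nodup)
    {β : Fin n →₀ ℕ} (hβ : β k ≠ 0) (p : MvPolynomial (Fin n) ℂ) :
    pdiffL l β p = pdiffL l (β - Finsupp.single k 1) (pderiv k p) := by
  set β' : Fin n →₀ ℕ := β - Finsupp.single k 1 with hβ'def
  have hβ'k : β' k = β k - 1 := by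
    rw [hβ'def, Finsupp.tsub_apply, Finsupp.single_apply, if_pos rfl]
  have hβ'ne : ∀ j : Fin n, j ≠ k → β' j = β j := fun j hj => by
    rw [hβ'def, Finsupp.tsub_apply, Finsupp.single_apply, if_neg (fun h => hj h.symm),
      Nat.sub_zero]
  induction l generalizing p with
  | nil => cases hk
  | cons i t ih =>
      have hnd' : t.Nodup := (List.nodup_cons.mp hnd).2
      rcases List.mem_cons.mp hk with rfl | hkt
      · have hknt : k ∉ t := (List.nodup_cons.mp hnd).1
        show (fun r => pderiv k r)^[β k] (pdiffL t β p) =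
          (fun r => pderiv k r)^[β' k] (pdiffL t β' (pderiv k p))
        rw [pdiffL_congr t (β := β') (β' := β) (fun j hj => hβ'ne j (fun h => hknt (h ▸ hj)))
            (pderiv k p),
          pdiffL_pderiv_comm, hβ'k]
        have h3 := Function.iterate_succ_apply (fun r => (pderiv k) r) (β k - 1)
          (pdiffL t β p)
        rw [Nat.succ_eq_add_one, show β k - 1 + 1 = β k from by omega] at h3
        exact h3
      · have hik : i ≠ k := fun h => (List.nodup_cons.mp hnd).1 (h ▸ hkt)
        show (fun r => pderiv i r)^[β i] (pdiffL t β p) =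
          (fun r => pderiv i r)^[β' i] (pdiffL t β' (pderiv k p))
        rw [ih hkt hnd', hβ'ne i hik]

lemma pdiff_sub_single {n : ℕ} (k : Fin n) {β : Fin n →₀ ℕ} (hβ : β k ≠ 0)
    (p : MvPolynomial (Fin n) ℂ) :
    pdiff β p = pdiff (β - Finsupp.single k 1) (pderiv k p) :=
  pdiffL_sub_single _ k (List.mem_finRange k) (List.nodup_finRange n) hβ p

lemma pdiffL_zero_exp {n : ℕ} (l : List (Fin n)) (p : MvPolynomial (Fin n) ℂ) :
    pdiffL l 0 p = p := by
  induction l with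
  | nil => rfl
  | cons i t ih => show (fun r => pderiv i r)^[(0 : Fin n →₀ ℕ) i] (pdiffL t 0 p) = p
                   rw [ih]; rfl

/-- vanishing of high-order products at ξ -/
lemma eval_pdiff_pow_mul_eq_zero {n : ℕ} (ξ : Fin n → ℂ) (h : MvPolynomial (Fin n) ℂ)
    (hh : eval ξ h = 0) :
    ∀ m : ℕ, ∀ β : Fin n →₀ ℕ, mdeg β = m → ∀ r : ℕ, m < r →
      ∀ p : MvPolynomial (Fin n) ℂ, eval ξ (pdiff β (h ^ r * p)) = 0 := by
  intro m
  induction m using Nat.strong_induction_on with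
  | _ m ih =>
      intro β hβm r hr p
      rcases Nat.eq_zero_or_pos m with rfl | hm
      · have hβ0 : β = 0 := (mdeg_eq_zero_iff β).mp hβm
        subst hβ0
        rw [pdiff_eq, pdiffL_zero_exp, map_mul, map_pow, hh,
          zero_pow (by omega : r ≠ 0), zero_mul]
      · have hβne : β ≠ 0 := fun h0 => by
          rw [h0, (mdeg_eq_zero_iff (0 : Fin n →₀ ℕ)).mpr rfl] at hβm; omega
        obtain ⟨k, hk⟩ : ∃ k, β k ≠ 0 := by
          by_contra hc
          push_neg at hc
          exact hβne (Finsupp.ext fun i => hc i)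
        rw [pdiff_sub_single k hk]
        have hr1 : r - 1 ≠ 0 := by omega
        have hrw : pderiv k (h ^ r * p) =
            h ^ (r - 1) * ((r : MvPolynomial (Fin n) ℂ) * pderiv k h * p + h * pderiv k p) := by
          rw [pderiv_mul, pderiv_pow]
          have : h ^ r = h ^ (r - 1) * h := by
            rw [← pow_succ, show r - 1 + 1 = r from by omega]
          rw [this]
          ring
        rw [hrw]
        have hmd : mdeg (β - Finsupp.single k 1) = m - 1 := by
          have := mdeg_sub_single hk
          omega
        exact ih (m - 1) (by omega) _ hmd (r - 1) (by omega) _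

lemma dapply_zero_right {n : ℕ} (ξ : Fin n → ℂ) (Λ : MvPolynomial (Fin n) ℂ) :
    dapply ξ Λ 0 = 0 := by
  have h := dapply_C_mul_right ξ Λ 0 0
  rw [map_zero, zero_mul, zero_mul] at h
  exact h

lemma dapply_sum_right {n : ℕ} (ξ : Fin n → ℂ) (Λ : MvPolynomial (Fin n) ℂ)
    {ι : Type*} (s : Finset ι) (g : ι → MvPolynomial (Fin n) ℂ) :
    dapply ξ Λ (∑ i ∈ s, g i) = ∑ i ∈ s, dapply ξ Λ (g i) := by
  induction s using Finset.cons_induction with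
  | empty => simpa using dapply_zero_right ξ Λ
  | cons i s his ih => rw [Finset.sum_cons, Finset.sum_cons, dapply_add_right, ih]


/-- a derivation-stable finite-dimensional space D containing 1, vanishing
on f and complete for f at ξ equals (f)^⊥ ∩ ℂ[d_ξ]; equivalently D = Q^⊥ for the
m_ξ-primary component Q of (f). -/
theorem statement9 {n N : ℕ} (ξ : Fin n → ℂ) (f : Fin N → MvPolynomial (Fin n) ℂ)
    (D : Submodule ℂ (MvPolynomial (Fin n) ℂ)) (hfin : FiniteDimensional ℂ D)
    (hstab : ∀ Λ ∈ D, ∀ k : Fin n, pderiv k Λ ∈ D)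
    (hvan : ∀ Λ ∈ D, ∀ i : Fin N, dapply ξ Λ (f i) = 0)
    (hone : (1 : MvPolynomial (Fin n) ℂ) ∈ D)
    (hcomplete : ∀ Δ : MvPolynomial (Fin n) ℂ,
      (∀ k : Fin n, pderiv k Δ ∈ D) → (∀ i : Fin N, dapply ξ Δ (f i) = 0) → Δ ∈ D) :
    (↑D : Set (MvPolynomial (Fin n) ℂ)) =
      {Λ | ∀ p ∈ Ideal.span (Set.range f), dapply ξ Λ p = 0} ∧
    ∀ Q J : Ideal (MvPolynomial (Fin n) ℂ), Q.IsPrimary → Q.radical = mIdeal ξ →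
      ¬ J ≤ mIdeal ξ → Ideal.span (Set.range f) = Q ⊓ J →
      (↑D : Set (MvPolynomial (Fin n) ℂ)) = {Λ | ∀ p ∈ Q, dapply ξ Λ p = 0} := by
  classical
  -- Step 1: D kills every monomial multiple of each f i
  have claimMon : ∀ m : ℕ, ∀ β : Fin n →₀ ℕ, mdeg β ≤ m → ∀ Λ ∈ D, ∀ i,
      dapply ξ Λ (monomial β 1 * f i) = 0 := by
    intro m
    induction m with
    | zero =>
        intro β hβ Λ hΛ i
        have hβ0 : β = 0 := (mdeg_eq_zero_iff β).mp (Nat.le_zero.mp hβ)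
        subst hβ0
        rw [monomial_zero', map_one, one_mul]
        exact hvan Λ hΛ i
    | succ m ih =>
        intro β hβ Λ hΛ i
        rcases eq_or_ne β 0 with rfl | hne
        · rw [monomial_zero', map_one, one_mul]
          exact hvan Λ hΛ i
        · obtain ⟨k, hk⟩ : ∃ k, β k ≠ 0 := by
            by_contra hc
            push_neg at hc
            exact hne (Finsupp.ext fun j => hc j)
          have hβeq : Finsupp.single k 1 + (β - Finsupp.single k 1) = β := by
            ext j
            rcases eq_or_ne j k with rfl | hj
            · rw [Finsupp.add_apply, Finsupp.single_apply, if_pos rfl, Finsupp.tsub_apply,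
                Finsupp.single_apply, if_pos rfl]
              omega
            · rw [Finsupp.add_apply, Finsupp.single_apply, if_neg (fun h => hj h.symm),
                Finsupp.tsub_apply, Finsupp.single_apply, if_neg (fun h => hj h.symm)]
              omega
          have hsplit : monomial β (1:ℂ) =
              X k * monomial (β - Finsupp.single k 1) 1 := by
            rw [X, monomial_mul, one_mul, hβeq]
          have hmd : mdeg (β - Finsupp.single k 1) ≤ m := by
            have := mdeg_sub_single hk
            omega
          rw [hsplit, mul_assoc, dapply_X_mul,
            ih _ hmd (pderiv k Λ) (hstab Λ hΛ k) i, ih _ hmd Λ hΛ i, mul_zero, add_zero]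
  -- Step 2: D kills every polynomial multiple of each f i
  have claimG : ∀ g : MvPolynomial (Fin n) ℂ, ∀ Λ ∈ D, ∀ i,
      dapply ξ Λ (g * f i) = 0 := by
    intro g
    induction g using MvPolynomial.induction_on' with
    | monomial β c =>
        intro Λ hΛ i
        rw [show (monomial β c : MvPolynomial (Fin n) ℂ) = C c * monomial β 1 by
            rw [C_mul_monomial, mul_one], mul_assoc, dapply_C_mul_right,
          claimMon (mdeg β) β le_rfl Λ hΛ i, mul_zero]
    | add g₁ g₂ h₁ h₂ =>
        intro Λ hΛ i
        rw [add_mul, dapply_add_right, h₁ Λ hΛ i, h₂ Λ hΛ i, add_zero]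
  -- D kills the ideal
  have hDkill : ∀ Λ ∈ D, ∀ p ∈ Ideal.span (Set.range f), dapply ξ Λ p = 0 := by
    intro Λ hΛ p hp
    obtain ⟨c, hc⟩ := (Submodule.mem_span_range_iff_exists_fun _).mp hp
    rw [← hc, dapply_sum_right]
    refine Finset.sum_eq_zero fun i _ => ?_
    rw [smul_eq_mul]
    exact claimG (c i) Λ hΛ i
  -- reverse inclusion by completeness
  have hrev : ∀ m : ℕ, ∀ Λ : MvPolynomial (Fin n) ℂ, Λ.totalDegree ≤ m →
      (∀ p ∈ Ideal.span (Set.range f), dapply ξ Λ p = 0) → Λ ∈ D := by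
    intro m
    induction m with
    | zero =>
        intro Λ hd hkill
        refine hcomplete Λ (fun k => ?_) (fun i => hkill (f i)
          (Ideal.subset_span (Set.mem_range_self i)))
        rw [pderiv_zero_of_totalDegree_zero k Λ (Nat.le_zero.mp hd)]
        exact D.zero_mem
    | succ m ih =>
        intro Λ hd hkill
        refine hcomplete Λ (fun k => ?_) (fun i => hkill (f i)
          (Ideal.subset_span (Set.mem_range_self i)))
        refine ih (pderiv k Λ) (totalDegree_pderiv_le k Λ m hd) (fun p hp => ?_)
        rw [← dapply_X_sub_mul]
        exact hkill _ (Ideal.mul_mem_left _ _ hp)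
  have part1 : (↑D : Set (MvPolynomial (Fin n) ℂ)) =
      {Λ | ∀ p ∈ Ideal.span (Set.range f), dapply ξ Λ p = 0} := by
    ext Λ
    exact ⟨fun hΛ p hp => hDkill Λ hΛ p hp, fun hΛ => hrev Λ.totalDegree Λ le_rfl hΛ⟩
  refine ⟨part1, ?_⟩
  intro Q J _ _ hJle hQJ
  rw [part1]
  ext Λ
  simp only [Set.mem_setOf_eq]
  constructor
  · -- Λ kills Q ⊓ J ⇒ Λ kills Q
    intro hΛ p hp
    obtain ⟨g, hgJ, hgm⟩ : ∃ g ∈ J, g ∉ mIdeal ξ := by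
      by_contra hc
      push_neg at hc
      exact hJle (fun x hx => hc x hx)
    have hge : eval ξ g ≠ 0 := fun h0 => hgm (by rwa [mIdeal, RingHom.mem_ker])
    set g' : MvPolynomial (Fin n) ℂ := C (eval ξ g)⁻¹ * g with hg'
    have hg'J : g' ∈ J := Ideal.mul_mem_left _ _ hgJ
    have hg'e : eval ξ g' = 1 := by
      rw [hg', map_mul, eval_C, inv_mul_cancel₀ hge]
    set h : MvPolynomial (Fin n) ℂ := 1 - g' with hhdef
    have hhe : eval ξ h = 0 := by rw [hhdef, map_sub, map_one, hg'e, sub_self]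
    set r : ℕ := Λ.totalDegree + 1 with hrdef
    set u : MvPolynomial (Fin n) ℂ := ∑ j ∈ Finset.range r, h ^ j with hu
    have hgeom : g' * u = 1 - h ^ r := by
      have hgs := geom_sum_mul h r
      have hg'h : g' = 1 - h := by rw [hhdef]; ring
      rw [hg'h, hu]
      linear_combination -hgs
    have hdecomp : dapply ξ Λ p = dapply ξ Λ (g' * (u * p)) + dapply ξ Λ (h ^ r * p) := by
      rw [← dapply_add_right]
      congr 1
      have h1 : g' * u + h ^ r = 1 := by rw [hgeom]; ring
      calc p = (g' * u + h ^ r) * p := by rw [h1, one_mul]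
        _ = g' * (u * p) + h ^ r * p := by ring
    rw [hdecomp]
    have t1 : dapply ξ Λ (g' * (u * p)) = 0 := by
      refine hΛ _ ?_
      rw [hQJ]
      refine Ideal.mem_inf.mpr ⟨?_, ?_⟩
      · exact Ideal.mul_mem_left _ _ (Ideal.mul_mem_left _ _ hp)
      · exact Ideal.mul_mem_right _ _ hg'J
    have t2 : dapply ξ Λ (h ^ r * p) = 0 := by
      rw [dapply]
      refine Finset.sum_eq_zero fun β hβ => ?_
      have hlt : mdeg β < r := by
        have h5 := MvPolynomial.le_totalDegree hβ
        rw [mdeg_eq_fsum] at h5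
        omega
      rw [eval_pdiff_pow_mul_eq_zero ξ h hhe (mdeg β) β rfl r hlt p, mul_zero]
    rw [t1, t2, add_zero]
  · -- Λ kills Q ⇒ Λ kills Q ⊓ J
    intro hΛ p hp
    rw [hQJ] at hp
    exact hΛ p hp.1
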